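/- Every standard representative matrix of a regular vector space is totally unimodular. Moreover, if (I | K) is a standard representative matrix of a vector space V_S, then (−K^T | I) is a standard representative matrix of the orthogonal complement V_S^⊥; hence if V_S is regular, so is V_S^⊥. -/

import Mathlib

/-- A matrix is totally unimodular iff every square submatrix has determinant 0, 1 or -1. -/
def TU {R X : Type*} (A : Matrix R X ℚ) : Prop :=
  ∀ (k : ℕ) (f : Fin k → R) (g : Fin k → X),
    (A.submatrix f g).det = 0 ∨ (A.submatrix f g).det = 1 ∨ (A.submatrix f g).det = -1

/-- `A` is a standard representative matrix of `V`: its rows are independent and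
span `V`, and after a column permutation it has the form `(I | K)`, i.e. some
injectively chosen columns form an identity matrix. -/
def IsStdRep {R X : Type*} [DecidableEq R] (A : Matrix R X ℚ) (V : Set (X → ℚ)) : Prop :=
  LinearIndependent ℚ (fun i => A i) ∧
  (Submodule.span ℚ (Set.range fun i => A i) : Set (X → ℚ)) = V ∧
  ∃ e : R → X, Function.Injective e ∧ ∀ i j, A i (e j) = if i = j then 1 else 0

/-- A regular vector space: one having a totally unimodular representative matrix. -/
def IsRegularSpace {X : Type*} (V : Set (X → ℚ)) : Prop :=
  ∃ (m : ℕ) (A : Matrix (Fin m) X ℚ), TU A ∧ LinearIndependent ℚ (fun i => A i) ∧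
    (Submodule.span ℚ (Set.range fun i => A i) : Set (X → ℚ)) = V

/-- The orthogonal complement of a collection of vectors. -/
def perp {X : Type*} [Fintype X] (V : Set (X → ℚ)) : Set (X → ℚ) :=
  {g | ∀ f ∈ V, ∑ x, f x * g x = 0}

namespace Stmt16Aux
open Matrix

lemma tri_mul {a b : ℚ} (ha : a = 0 ∨ a = 1 ∨ a = -1) (hb : b = 0 ∨ b = 1 ∨ b = -1) :
    a * b = 0 ∨ a * b = 1 ∨ a * b = -1 := by
  rcases ha with h | h | h <;> rcases hb with h' | h' | h' <;> simp [h, h']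

lemma TU.submatrix {R X R' X' : Type*} {A : Matrix R X ℚ} (hA : TU A)
    (r : R' → R) (c : X' → X) : TU (A.submatrix r c) := by
  intro k f g
  have : (A.submatrix r c).submatrix f g = A.submatrix (r ∘ f) (c ∘ g) := rfl
  rw [this]
  exact hA k _ _

lemma TU.transpose {R X : Type*} {A : Matrix R X ℚ} (hA : TU A) : TU Aᵀ := by
  intro k f g
  have : Aᵀ.submatrix f g = (A.submatrix g f)ᵀ := rfl
  rw [this, Matrix.det_transpose]
  exact hA k g f

lemma TU.neg {R X : Type*} {A : Matrix R X ℚ} (hA : TU A) : TU (-A) := by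
  intro k f g
  have : (-A).submatrix f g = -(A.submatrix f g) := rfl
  rw [this, Matrix.det_neg]
  exact tri_mul (by simpa using neg_one_pow_eq_or ℚ (Fintype.card (Fin k))) (hA k f g)

/-- Appending identity columns preserves total unimodularity. -/
lemma TU.appendId {R X : Type*} [DecidableEq R] {A : Matrix R X ℚ} (hA : TU A) :
    TU (Matrix.of fun r => Sum.elim (A r) fun r' => if r = r' then (1 : ℚ) else 0) := by
  classical
  set M : Matrix R (X ⊕ R) ℚ :=
    Matrix.of fun r => Sum.elim (A r) fun r' => if r = r' then (1 : ℚ) else 0 with hM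
  intro k
  induction k with
  | zero =>
    intro f g
    right; left
    exact Matrix.det_fin_zero
  | succ n ih =>
    intro f g
    by_cases hf : Function.Injective f
    · by_cases hg : ∃ i r, g i = Sum.inr r
      · obtain ⟨i, r, hir⟩ := hg
        by_cases hr : ∃ j, f j = r
        · obtain ⟨j0, hj0⟩ := hr
          rw [Matrix.det_succ_column _ i, Finset.sum_eq_single j0]
          · have hentry : (M.submatrix f g) j0 i = 1 := by
              simp [Matrix.submatrix_apply, hir, hM, hj0]
            rw [hentry, mul_one]
            have hminor : (M.submatrix f g).submatrix j0.succAbove i.succAbove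
                = M.submatrix (f ∘ j0.succAbove) (g ∘ i.succAbove) := rfl
            rw [hminor]
            exact tri_mul (by simpa using neg_one_pow_eq_or ℚ ((j0 : ℕ) + (i : ℕ))) (ih _ _)
          · intro b _ hb
            have hentry : (M.submatrix f g) b i = 0 := by
              have : f b ≠ r := fun h => hb (hf (h.trans hj0.symm))
              simp [Matrix.submatrix_apply, hir, hM, this]
            rw [hentry]; ring
          · intro h; exact absurd (Finset.mem_univ j0) h
        · left
          apply Matrix.det_eq_zero_of_column_eq_zero i
          intro j
          have : f j ≠ r := fun h => hr ⟨j, h⟩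
          simp [Matrix.submatrix_apply, hir, hM, this]
      · push_neg at hg
        have hx : ∀ i, ∃ x, g i = Sum.inl x := by
          intro i
          cases hgi : g i with
          | inl x => exact ⟨x, rfl⟩
          | inr r => exact absurd hgi (hg i r)
        choose x hx using hx
        have : M.submatrix f g = A.submatrix f x := by
          ext i j
          rw [Matrix.submatrix_apply, hx j]
          rfl
        rw [this]
        exact hA _ f x
    · obtain ⟨a, b, hab, hne⟩ := Function.not_injective_iff.mp hf
      left
      apply Matrix.det_zero_of_row_eq hne
      funext c
      simp [Matrix.submatrix_apply, hab]

end Stmt16Aux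

namespace Stmt16Aux
open Matrix

/-- bijection between `Fin k ⊕ complement` and the ambient type, given injective `f`. -/
lemma sumCompl_bij {α β : Type*} {f : α → β} (hf : Function.Injective f) :
    Function.Bijective (Sum.elim f (Subtype.val : {b : β // ¬∃ a, f a = b} → β)) := by
  constructor
  · rintro (a | c) (a' | c') h
    · simp only [Sum.elim_inl] at h; rw [hf h]
    · exact absurd ⟨a, h⟩ c'.prop
    · exact absurd ⟨a', h.symm⟩ c.prop
    · simp only [Sum.elim_inr] at h; rw [Subtype.ext h]
  · intro b
    by_cases hb : ∃ a, f a = b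
    · exact ⟨Sum.inl hb.choose, hb.choose_spec⟩
    · exact ⟨Sum.inr ⟨b, hb⟩, rfl⟩

/-- A square minor using all rows of a matrix with identity columns reduces to an
arbitrary minor. -/
lemma det_reduce {R Y : Type*} [Fintype R] [DecidableEq R] {M : Matrix R Y ℚ}
    {e : R → Y} (hMe : ∀ r r', M r (e r') = if r = r' then (1 : ℚ) else 0)
    {k : ℕ} {f : Fin k → R} (hf : Function.Injective f) (g : Fin k → Y) :
    ∃ h : R → Y, (M.submatrix f g).det = (M.submatrix id h).det := by
  classical
  refine ⟨fun r => if hr : ∃ i, f i = r then g hr.choose else e r, ?_⟩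
  set h : R → Y := fun r => if hr : ∃ i, f i = r then g hr.choose else e r with hh
  have hhf : ∀ i' : Fin k, h (f i') = g i' := by
    intro i'
    have hex : ∃ i, f i = f i' := ⟨i', rfl⟩
    simp only [hh]
    rw [dif_pos hex]
    exact congrArg g (hf hex.choose_spec)
  have hhe : ∀ (c : {b : R // ¬∃ a, f a = b}), h c.1 = e c.1 := by
    intro c
    simp only [hh]
    rw [dif_neg c.prop]
  let ε : (Fin k ⊕ {b : R // ¬∃ a, f a = b}) ≃ R := Equiv.ofBijective _ (sumCompl_bij hf)
  have hεl : ∀ i, ε (Sum.inl i) = f i := fun i => rfl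
  have hεr : ∀ c, ε (Sum.inr c) = c.1 := fun c => rfl
  have key : (M.submatrix id h).submatrix ε ε =
      Matrix.fromBlocks (M.submatrix f g) 0
        (Matrix.of fun (c : {b : R // ¬∃ a, f a = b}) i => M c.1 (g i)) 1 := by
    ext (i | c) (i' | c')
    · simp [Matrix.submatrix_apply, hεl, hhf i', Matrix.fromBlocks]
    · have : M (f i) (e c'.1) = 0 := by
        rw [hMe]
        exact if_neg (fun hfc => c'.prop ⟨i, hfc⟩)
      simp [Matrix.submatrix_apply, hεl, hεr, hhe c', this, Matrix.fromBlocks]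
    · simp [Matrix.submatrix_apply, hεl, hεr, hhf i', Matrix.fromBlocks]
    · have : M c.1 (e c'.1) = if c = c' then (1 : ℚ) else 0 := by
        rw [hMe]
        by_cases hcc : c = c'
        · simp [hcc]
        · rw [if_neg (fun h => hcc (Subtype.ext h)), if_neg hcc]
      simp [Matrix.submatrix_apply, hεr, hhe c', this, Matrix.fromBlocks, Matrix.one_apply]
  rw [← Matrix.det_submatrix_equiv_self ε (M.submatrix id h), key,
    Matrix.det_fromBlocks_zero₁₂, Matrix.det_one, mul_one]

/-- Rows of a matrix with identity columns are linearly independent. -/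
lemma li_of_id_cols {R Y : Type*} [Fintype R] [DecidableEq R] {M : Matrix R Y ℚ}
    {e : R → Y} (hMe : ∀ r r', M r (e r') = if r = r' then (1 : ℚ) else 0) :
    LinearIndependent ℚ (fun i => M i) := by
  classical
  rw [Fintype.linearIndependent_iff]
  intro c hc r
  have := congrFun hc (e r)
  simpa [Finset.sum_apply, hMe, Finset.sum_ite_eq'] using this

/-- The submodule of vectors orthogonal to all rows of a family. -/
def perpSpan {X ι : Type*} [Fintype X] (v : ι → X → ℚ) : Submodule ℚ (X → ℚ) where
  carrier := {g | ∀ i, ∑ x, v i x * g x = 0}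
  add_mem' := by
    intro a b ha hb i
    simp only [Pi.add_apply, mul_add, Finset.sum_add_distrib, ha i, hb i, add_zero]
  zero_mem' := by intro i; simp
  smul_mem' := by
    intro c a ha i
    simp only [Pi.smul_apply, smul_eq_mul]
    have : (∑ x, v i x * (c * a x)) = c * ∑ x, v i x * a x := by
      rw [Finset.mul_sum]
      exact Finset.sum_congr rfl fun x _ => by ring
    rw [this, ha i, mul_zero]

lemma perp_span_eq {X ι : Type*} [Fintype X] (v : ι → X → ℚ) :
    perp ((Submodule.span ℚ (Set.range v) : Submodule ℚ (X → ℚ)) : Set (X → ℚ)) =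
      (perpSpan v : Set (X → ℚ)) := by
  ext g
  constructor
  · intro hg i
    exact hg (v i) (Submodule.subset_span ⟨i, rfl⟩)
  · intro hg f hf
    induction hf using Submodule.span_induction with
    | mem x hx => obtain ⟨i, rfl⟩ := hx; exact hg i
    | zero => simp
    | add x y hx hy hx' hy' =>
      simp only [Pi.add_apply, add_mul, Finset.sum_add_distrib, hx', hy', add_zero]
    | smul a x hx hx' =>
      simp only [Pi.smul_apply, smul_eq_mul]
      have : (∑ x', a * x x' * g x') = a * ∑ x', x x' * g x' := by
        rw [Finset.mul_sum]
        exact Finset.sum_congr rfl fun x' _ => by ring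
      rw [this, hx', mul_zero]

/-- Row space of a product is contained in the row space of the right factor. -/
lemma span_rows_mul_le {R S X : Type*} [Fintype S] (M : Matrix R S ℚ) (N : Matrix S X ℚ) :
    Submodule.span ℚ (Set.range fun i => (M * N) i) ≤
      Submodule.span ℚ (Set.range fun t => N t) := by
  rw [Submodule.span_le]
  rintro _ ⟨i, rfl⟩
  show (M * N) i ∈ _
  have : (M * N) i = ∑ t, M i t • N t := by
    funext x
    simp [Matrix.mul_apply, Finset.sum_apply]
  rw [this]
  exact Submodule.sum_mem _ fun t _ =>
    Submodule.smul_mem _ _ (Submodule.subset_span ⟨t, rfl⟩)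

end Stmt16Aux

namespace Stmt16Aux
open Matrix Submodule

lemma part1 {X R : Type*} [DecidableEq R] (V : Set (X → ℚ)) (A : Matrix R X ℚ)
    (hV : IsRegularSpace V) (hA : IsStdRep A V) : TU A := by
  classical
  obtain ⟨m, A', hTU', hLI', hSp'⟩ := hV
  obtain ⟨hLIA, hSpA, e, he, hAe⟩ := hA
  have hspan_eq : Submodule.span ℚ (Set.range fun i => A i) =
      Submodule.span ℚ (Set.range fun i => A' i) :=
    SetLike.coe_injective (hSpA.trans hSp'.symm)
  haveI : FiniteDimensional ℚ (Submodule.span ℚ (Set.range fun i => A' i)) :=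
    FiniteDimensional.span_of_finite ℚ (Set.finite_range _)
  let b : Module.Basis (Fin m) ℚ (Submodule.span ℚ (Set.range fun i => A' i)) := Module.Basis.span hLI'
  let b2 : Module.Basis R ℚ (Submodule.span ℚ (Set.range fun i => A' i)) :=
    (Module.Basis.span hLIA).map (LinearEquiv.ofEq _ _ hspan_eq)
  haveI : Fintype R := FiniteDimensional.fintypeBasisIndex b2
  have hcard : Fintype.card R = m := by
    rw [← Module.finrank_eq_card_basis b2, Module.finrank_eq_card_basis b, Fintype.card_fin]
  let ε : R ≃ Fin m := Fintype.equivFinOfCardEq hcard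
  let A'' : Matrix R X ℚ := A'.submatrix ε id
  have hTU'' : TU A'' := TU.submatrix hTU' ε id
  have hrange : (Set.range fun t => A'' t) = Set.range fun i => A' i := by
    have : (fun t => A'' t) = (fun i => A' i) ∘ ε := rfl
    rw [this, Function.Surjective.range_comp ε.surjective]
  have hmem : ∀ r, A r ∈ Submodule.span ℚ (Set.range fun t => A'' t) := by
    intro r
    have h0 : A r ∈ Submodule.span ℚ (Set.range fun i => A i) :=
      Submodule.subset_span ⟨r, rfl⟩
    rw [hspan_eq] at h0
    rwa [hrange]
  have hW := fun r => (mem_span_range_iff_exists_fun ℚ).mp (hmem r)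
  choose W hW using hW
  have hAW : ∀ (h : R → X), A.submatrix id h = (Matrix.of W) * (A''.submatrix id h) := by
    intro h
    ext r s
    rw [Matrix.mul_apply]
    have h1 := congrFun (hW r) (h s)
    simp only [Finset.sum_apply, Pi.smul_apply, smul_eq_mul] at h1
    simpa [Matrix.submatrix_apply] using h1.symm
  have htri'' : ∀ (h : R → X), (A''.submatrix id h).det = 0 ∨
      (A''.submatrix id h).det = 1 ∨ (A''.submatrix id h).det = -1 := by
    intro h
    let σ : Fin (Fintype.card R) ≃ R := (Fintype.equivFin R).symm
    have h2 := hTU'' (Fintype.card R) σ (h ∘ σ)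
    rwa [show A''.submatrix σ (h ∘ σ) = (A''.submatrix id h).submatrix σ σ from rfl,
      Matrix.det_submatrix_equiv_self] at h2
  have hWC : (Matrix.of W) * (A''.submatrix id e) = 1 := by
    ext r s
    rw [Matrix.mul_apply, Matrix.one_apply]
    have h1 := congrFun (hW r) (e s)
    simp only [Finset.sum_apply, Pi.smul_apply, smul_eq_mul] at h1
    exact h1.trans (hAe r s)
  have hdetW : (Matrix.of W).det = 1 ∨ (Matrix.of W).det = -1 := by
    have h1 : (Matrix.of W).det * (A''.submatrix id e).det = 1 := by
      rw [← Matrix.det_mul, hWC, Matrix.det_one]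
    rcases htri'' e with h | h | h
    · rw [h, mul_zero] at h1; exact absurd h1 (by norm_num)
    · left; rwa [h, mul_one] at h1
    · right; rw [h] at h1; linarith
  intro k f g
  by_cases hf : Function.Injective f
  · obtain ⟨h, hdet⟩ := det_reduce hAe hf g
    rw [hdet, hAW h, Matrix.det_mul]
    exact tri_mul (Or.inr hdetW) (htri'' h)
  · obtain ⟨a, b, hab, hne⟩ := Function.not_injective_iff.mp hf
    left
    apply Matrix.det_zero_of_row_eq hne
    funext c
    simp [Matrix.submatrix_apply, hab]

end Stmt16Aux

namespace Stmt16Aux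
open Matrix

lemma part2 {B : Type*} [Fintype B] [DecidableEq B] {m : ℕ}
    (K : Matrix (Fin m) B ℚ) (V : Set (Fin m ⊕ B → ℚ))
    (hA : IsStdRep (Matrix.of fun i =>
        (Sum.elim (fun j => if i = j then (1 : ℚ) else 0) (K i)) :
        Matrix (Fin m) (Fin m ⊕ B) ℚ) V) :
    IsStdRep (Matrix.of fun b =>
        (Sum.elim (fun j => -K j b) (fun b' => if b = b' then (1 : ℚ) else 0)) :
        Matrix B (Fin m ⊕ B) ℚ) (perp V) := by
  classical
  set A : Matrix (Fin m) (Fin m ⊕ B) ℚ := Matrix.of fun i =>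
    (Sum.elim (fun j => if i = j then (1 : ℚ) else 0) (K i)) with hA0
  set D : Matrix B (Fin m ⊕ B) ℚ := Matrix.of fun b =>
    (Sum.elim (fun j => -K j b) (fun b' => if b = b' then (1 : ℚ) else 0)) with hD0
  obtain ⟨hLIA, hSpA, -⟩ := hA
  have hDe : ∀ b b', D b (Sum.inr b') = if b = b' then (1 : ℚ) else 0 := fun b b' => rfl
  have hDli : LinearIndependent ℚ (fun b => D b) := li_of_id_cols hDe
  refine ⟨hDli, ?_, Sum.inr, Sum.inr_injective, hDe⟩
  have hperp : perp V = (perpSpan (fun i => A i) : Set (Fin m ⊕ B → ℚ)) := by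
    rw [← hSpA, perp_span_eq]
  rw [hperp]
  have hsub : Submodule.span ℚ (Set.range fun b => D b) = perpSpan (fun i => A i) := by
    apply le_antisymm
    · rw [Submodule.span_le]
      rintro _ ⟨b, rfl⟩
      intro i
      show ∑ x, A i x * D b x = 0
      rw [Fintype.sum_sum_type]
      have e1 : ∑ j, A i (Sum.inl j) * D b (Sum.inl j) = -K i b := by
        simp [hA0, hD0, ite_mul, Finset.sum_ite_eq]
      have e2 : ∑ b', A i (Sum.inr b') * D b (Sum.inr b') = K i b := by
        simp [hA0, hD0, mul_ite, Finset.sum_ite_eq']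
      rw [e1, e2]; ring
    · intro g hg
      have hgid : g = ∑ b, g (Sum.inr b) • D b := by
        funext x
        rw [Finset.sum_apply]
        cases x with
        | inr b =>
          simp [hD0, mul_ite, Finset.sum_ite_eq']
        | inl j =>
          have h1 : ∑ x, A j x * g x = 0 := hg j
          rw [Fintype.sum_sum_type] at h1
          have e1 : ∑ i, A j (Sum.inl i) * g (Sum.inl i) = g (Sum.inl j) := by
            simp [hA0, ite_mul, Finset.sum_ite_eq]
          have e2 : ∑ b', A j (Sum.inr b') * g (Sum.inr b') = ∑ b', K j b' * g (Sum.inr b') := by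
            simp [hA0]
          rw [e1, e2] at h1
          have e3 : ∑ b, g (Sum.inr b) • D b (Sum.inl j)
              = -∑ b, K j b * g (Sum.inr b) := by
            rw [← Finset.sum_neg_distrib]
            refine Finset.sum_congr rfl fun b _ => ?_
            simp [hD0]
            ring
          rw [show (∑ b, (g (Sum.inr b) • D b) (Sum.inl j))
              = ∑ b, g (Sum.inr b) • D b (Sum.inl j) from rfl, e3]
          linarith
      rw [hgid]
      exact Submodule.sum_mem _ fun b _ =>
        Submodule.smul_mem _ _ (Submodule.subset_span ⟨b, rfl⟩)
  rw [hsub]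

end Stmt16Aux

namespace Stmt16Aux
open Matrix Submodule

lemma part3 {X : Type*} [Fintype X] (V : Set (X → ℚ)) (hV : IsRegularSpace V) :
    IsRegularSpace (perp V) := by
  classical
  obtain ⟨n, A', hTU', hLI', hSp'⟩ := hV
  -- the columns of A' span ℚ^n
  set cols : X → (Fin n → ℚ) := fun x i => A' i x with hcols
  have hspanW : Submodule.span ℚ (Set.range cols) = ⊤ := by
    by_contra hW
    have hex : ∃ v, v ∉ Submodule.span ℚ (Set.range cols) := by
      by_contra hall
      push_neg at hall
      exact hW (Submodule.eq_top_iff'.mpr hall)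
    obtain ⟨v, hv⟩ := hex
    set Q := (Fin n → ℚ) ⧸ (Submodule.span ℚ (Set.range cols))
    have hne : (Submodule.span ℚ (Set.range cols)).mkQ v ≠ 0 := by
      rw [Submodule.mkQ_apply, ne_eq, Submodule.Quotient.mk_eq_zero]
      exact hv
    obtain ⟨φQ, hφQ⟩ : ∃ φQ : Module.Dual ℚ Q, φQ ((Submodule.span ℚ (Set.range cols)).mkQ v) ≠ 0 := by
      by_contra hall
      push_neg at hall
      exact hne ((Module.forall_dual_apply_eq_zero_iff ℚ _).mp hall)
    set φ : (Fin n → ℚ) →ₗ[ℚ] ℚ := φQ.comp (Submodule.span ℚ (Set.range cols)).mkQ with hφ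
    have hφW : ∀ w ∈ Submodule.span ℚ (Set.range cols), φ w = 0 := by
      intro w hw
      have : (Submodule.span ℚ (Set.range cols)).mkQ w = 0 := by
        rw [Submodule.mkQ_apply, Submodule.Quotient.mk_eq_zero]; exact hw
      simp [hφ, this]
    set c : Fin n → ℚ := fun i => φ (fun j => if i = j then 1 else 0) with hc
    have hφsum : ∀ y : Fin n → ℚ, φ y = ∑ i, y i * c i := by
      intro y
      rw [LinearMap.pi_apply_eq_sum_univ φ y]
      exact Finset.sum_congr rfl fun i _ => by rw [smul_eq_mul]
    have hczero : ∀ i, c i = 0 := by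
      have hsum0 : ∑ i, c i • A' i = 0 := by
        funext x
        rw [Finset.sum_apply]
        have h1 : φ (cols x) = 0 := hφW _ (Submodule.subset_span ⟨x, rfl⟩)
        rw [hφsum (cols x)] at h1
        simpa [hcols, mul_comm] using h1
      exact Fintype.linearIndependent_iff.mp hLI' _ hsum0
    apply hφQ
    have : φ v = 0 := by
      rw [hφsum v]
      simp [hczero]
    exact this
  -- choose a basis among the columns
  obtain ⟨t, hts, htspan, htli⟩ := exists_linearIndependent ℚ (Set.range cols)
  rw [hspanW] at htspan
  haveI : Fintype t := (htli.setFinite).fintype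
  let bt : Module.Basis t ℚ (Fin n → ℚ) := Module.Basis.mk htli (by rw [Subtype.range_coe, htspan])
  have hcardt : Fintype.card t = n := by
    rw [← Module.finrank_eq_card_basis bt, Module.finrank_fin_fun]
  let τ : Fin n ≃ t := (Fintype.equivFinOfCardEq hcardt).symm
  have hpre : ∀ y : t, ∃ x : X, cols x = (y : Fin n → ℚ) := fun y => hts y.2
  choose pre hpre using hpre
  set e : Fin n → X := fun i => pre (τ i) with he0
  have he : Function.Injective e := by
    intro i j hij
    apply τ.injective
    apply Subtype.ext
    rw [← hpre (τ i), ← hpre (τ j)]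
    exact congrArg cols hij
  -- the square column submatrix is invertible
  set Csq : Matrix (Fin n) (Fin n) ℚ := Matrix.of fun i j => A' i (e j) with hCsq0
  have hCsqU : IsUnit Csq := by
    rw [← Matrix.linearIndependent_cols_iff_isUnit]
    have : (fun j => Csqᵀ j) = (fun y : t => (y : Fin n → ℚ)) ∘ τ := by
      funext j
      have h1 : cols (e j) = ((τ j : t) : Fin n → ℚ) := hpre (τ j)
      funext i
      exact (congrFun h1 i :)
    rw [show Csq.col = fun j => Csqᵀ j from rfl, this]
    exact htli.comp τ τ.injective
  have hCsqdet : IsUnit Csq.det := (Matrix.isUnit_iff_isUnit_det Csq).mp hCsqU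
  set A : Matrix (Fin n) X ℚ := Csq⁻¹ * A' with hAdef
  have hAe : ∀ i j, A i (e j) = if i = j then (1 : ℚ) else 0 := by
    intro i j
    have h1 : A i (e j) = (Csq⁻¹ * Csq) i j := by
      rw [hAdef, Matrix.mul_apply, Matrix.mul_apply]
      rfl
    rw [h1, Matrix.nonsing_inv_mul _ hCsqdet, Matrix.one_apply]
  have hAli : LinearIndependent ℚ (fun i => A i) := li_of_id_cols hAe
  have hspanAA' : Submodule.span ℚ (Set.range fun i => A i)
      = Submodule.span ℚ (Set.range fun i => A' i) := by
    apply le_antisymm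
    · exact span_rows_mul_le Csq⁻¹ A'
    · have h2 : Csq * A = A' := by
        rw [hAdef, ← Matrix.mul_assoc, Matrix.mul_nonsing_inv _ hCsqdet, Matrix.one_mul]
      have := span_rows_mul_le Csq A
      rwa [h2] at this
  have hSpAV : (Submodule.span ℚ (Set.range fun i => A i) : Set (X → ℚ)) = V := by
    rw [hspanAA']; exact hSp'
  have hStd : IsStdRep A V := ⟨hAli, hSpAV, e, he, hAe⟩
  have hTUA : TU A := part1 V A ⟨n, A', hTU', hLI', hSp'⟩ hStd
  -- build the dual matrix D over the complement of the chosen columns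
  set Bt := {x : X // ¬∃ i, e i = x} with hBt
  let σ : (Fin n ⊕ Bt) ≃ X := Equiv.ofBijective _ (sumCompl_bij he)
  have hσl : ∀ i, σ (Sum.inl i) = e i := fun i => rfl
  have hσr : ∀ c : Bt, σ (Sum.inr c) = c.1 := fun c => rfl
  set M' : Matrix Bt (Fin n ⊕ Bt) ℚ := Matrix.of fun b =>
    Sum.elim ((-(Matrix.of fun i (c : Bt) => A i c.1)ᵀ) b)
      (fun b' => if b = b' then (1 : ℚ) else 0) with hM'
  have hTUM' : TU M' :=
    TU.appendId (TU.neg (TU.transpose (TU.submatrix hTUA id (fun c : Bt => c.1))))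
  set D : Matrix Bt X ℚ := M'.submatrix id σ.symm with hD0
  have hTUD : TU D := TU.submatrix hTUM' id σ.symm
  have hσsl : ∀ i, σ.symm (e i) = Sum.inl i := by
    intro i; rw [← hσl i, Equiv.symm_apply_apply]
  have hσsr : ∀ c : Bt, σ.symm c.1 = Sum.inr c := by
    intro c; rw [← hσr c, Equiv.symm_apply_apply]
  have hDc : ∀ b c : Bt, D b c.1 = if b = c then (1 : ℚ) else 0 := by
    intro b c
    rw [hD0, Matrix.submatrix_apply, hσsr c]
    rfl
  have hDe : ∀ b i, D b (e i) = -A i b.1 := by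
    intro b i
    rw [hD0, Matrix.submatrix_apply, hσsl i]
    rfl
  have hDli : LinearIndependent ℚ (fun b => D b) := li_of_id_cols hDc
  -- span of the rows of D is perp V
  have hperp : perp V = (perpSpan (fun i => A i) : Set (X → ℚ)) := by
    rw [← hSpAV, perp_span_eq]
  have hsub : Submodule.span ℚ (Set.range fun b => D b) = perpSpan (fun i => A i) := by
    apply le_antisymm
    · rw [Submodule.span_le]
      rintro _ ⟨b, rfl⟩
      intro i
      show ∑ x, A i x * D b x = 0
      rw [← Fintype.sum_bijective σ σ.bijective (fun y => A i (σ y) * D b (σ y))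
        (fun x => A i x * D b x) (fun y => rfl)]
      rw [Fintype.sum_sum_type]
      have e1 : ∑ j, A i (σ (Sum.inl j)) * D b (σ (Sum.inl j)) = -A i b.1 := by
        have : ∀ j, A i (σ (Sum.inl j)) * D b (σ (Sum.inl j))
            = (if i = j then (1 : ℚ) else 0) * (-A j b.1) := by
          intro j; rw [hσl, hAe, hDe]
        simp only [this, ite_mul, one_mul, zero_mul]
        rw [Finset.sum_ite_eq]
        simp
      have e2 : ∑ c : Bt, A i (σ (Sum.inr c)) * D b (σ (Sum.inr c)) = A i b.1 := by
        have : ∀ c : Bt, A i (σ (Sum.inr c)) * D b (σ (Sum.inr c))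
            = (if b = c then A i c.1 else 0) := by
          intro c; rw [hσr, hDc]
          by_cases hbc : b = c <;> simp [hbc]
        simp only [this]
        rw [Finset.sum_ite_eq]
        simp
      rw [e1, e2]; ring
    · intro g hg
      have hgid : g = ∑ b : Bt, g b.1 • D b := by
        funext x
        obtain ⟨y, rfl⟩ := σ.surjective x
        rw [Finset.sum_apply]
        cases y with
        | inr c =>
          rw [hσr]
          have : ∀ b : Bt, g b.1 • D b c.1 = if b = c then g b.1 else 0 := by
            intro b
            rw [hDc, smul_eq_mul]
            by_cases hbc : b = c <;> simp [hbc]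
          simp only [Pi.smul_apply, smul_eq_mul] at this ⊢
          rw [show (∑ b : Bt, g b.1 * D b c.1) = ∑ b : Bt, if b = c then g b.1 else 0 from
            Finset.sum_congr rfl fun b _ => this b]
          rw [Finset.sum_ite_eq']
          simp
        | inl i =>
          rw [hσl]
          have h1 : ∑ x, A i x * g x = 0 := hg i
          rw [← Fintype.sum_bijective σ σ.bijective (fun y => A i (σ y) * g (σ y))
            (fun x => A i x * g x) (fun y => rfl), Fintype.sum_sum_type] at h1
          have e1 : ∑ j, A i (σ (Sum.inl j)) * g (σ (Sum.inl j)) = g (e i) := by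
            have : ∀ j, A i (σ (Sum.inl j)) * g (σ (Sum.inl j))
                = (if i = j then (1 : ℚ) else 0) * g (e j) := by
              intro j; rw [hσl, hAe]
            simp only [this, ite_mul, one_mul, zero_mul]
            rw [Finset.sum_ite_eq]
            simp
          rw [e1] at h1
          have e2 : ∑ b : Bt, g b.1 • D b (e i) = -∑ c : Bt, A i (σ (Sum.inr c)) * g (σ (Sum.inr c)) := by
            rw [← Finset.sum_neg_distrib]
            refine Finset.sum_congr rfl fun b _ => ?_
            rw [hDe, hσr, smul_eq_mul]
            ring
          simp only [Pi.smul_apply]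
          rw [e2]
          linarith
      rw [hgid]
      exact Submodule.sum_mem _ fun b _ =>
        Submodule.smul_mem _ _ (Submodule.subset_span ⟨b, rfl⟩)
  -- reindex by Fin
  let εB : Fin (Fintype.card Bt) ≃ Bt := (Fintype.equivFin Bt).symm
  refine ⟨Fintype.card Bt, D.submatrix εB id, TU.submatrix hTUD εB id, ?_, ?_⟩
  · exact hDli.comp εB εB.injective
  · have hr : (Set.range fun i => D.submatrix εB id i) = Set.range fun b => D b :=
      Function.Surjective.range_comp εB.surjective (fun b => D b)
    rw [hr, hsub, ← hperp]

end Stmt16Aux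


theorem stmt16 {X R B : Type*} [Fintype X] [Fintype B] [DecidableEq R] [DecidableEq B]
    {m : ℕ} :
    -- every standard representative matrix of a regular vector space is TU
    (∀ (V : Set (X → ℚ)) (A : Matrix R X ℚ), IsRegularSpace V → IsStdRep A V → TU A) ∧
    -- if (I | K) is a standard representative matrix of V, then (-Kᵀ | I) is a
    -- standard representative matrix of Vᗮ
    (∀ (K : Matrix (Fin m) B ℚ) (V : Set ((Fin m) ⊕ B → ℚ)),
      IsStdRep (Matrix.of fun i =>
          (Sum.elim (fun j => if i = j then (1 : ℚ) else 0) (K i)) :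
          Matrix (Fin m) (Fin m ⊕ B) ℚ) V →
      IsStdRep (Matrix.of fun b =>
          (Sum.elim (fun j => -K j b) (fun b' => if b = b' then (1 : ℚ) else 0)) :
          Matrix B (Fin m ⊕ B) ℚ) (perp V)) ∧
    -- if V is regular then so is Vᗮ
    (∀ V : Set (X → ℚ), IsRegularSpace V → IsRegularSpace (perp V)) := by
  refine ⟨fun V A hV hA => Stmt16Aux.part1 V A hV hA,
    fun K V hA => Stmt16Aux.part2 K V hA,
    fun V hV => Stmt16Aux.part3 V hV⟩
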